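/- Let R be an integral domain which is a ℚ-algebra and f ∈ R⟦X⟧, with flow Φ(X,T) ∈ R⟦X,T⟧. Then the formal partial derivative of Φ with respect to T equals the substitution of Φ for the variable X in f: ∂Φ/∂T = f(Φ(X,T)) in R⟦X,T⟧; moreover f · ∂Φ/∂X = ∂Φ/∂T. In other words, the flow formally solves the autonomous differential equation δ_t Φ = f(Φ). -/

import Mathlib

open PowerSeries

/-- The autonomous polynomials of a power series: `A_1(f) = f` and
`A_{n+1}(f) = f·δ(A_n(f))`.  Here `autPolyPS f m` is `A_{m+1}(f)`. -/
noncomputable def autPolyPS {R : Type*} [CommRing R] (f : PowerSeries R) :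
    ℕ → PowerSeries R
  | 0 => f
  | m + 1 => f * derivativeFun (autPolyPS f m)

/-- The flow `Φ(X,T) = X + ∑_{n≥1} A_n(f)(X)·T^n/n!` of `f ∈ R⟦X⟧`, as an element of the
two-variable power series ring `R⟦X,T⟧` (variable `0` is `X`, variable `1` is `T`). -/
noncomputable def flowMv {R : Type*} [CommRing R] [Algebra ℚ R] (f : PowerSeries R) :
    MvPowerSeries (Fin 2) R :=
  fun d => if d 1 = 0 then (if d 0 = 1 then 1 else 0)
    else algebraMap ℚ R (1 / (d 1).factorial) *
      PowerSeries.coeff (d 0) (autPolyPS f (d 1 - 1))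

/-- Formal partial derivative of a two-variable power series with respect to variable `i`. -/
noncomputable def pderiv2 {R : Type*} [CommRing R] (i : Fin 2)
    (Φ : MvPowerSeries (Fin 2) R) : MvPowerSeries (Fin 2) R :=
  fun d => ((d i + 1 : ℕ) : R) * MvPowerSeries.coeff (d + Finsupp.single i 1) Φ

/-- Substitution of a multivariable power series `u` with zero constant coefficient for the
variable of a one-variable power series `f`. -/
noncomputable def substPS {R : Type*} [CommRing R] {σ : Type*} (u : MvPowerSeries σ R)
    (f : PowerSeries R) : MvPowerSeries σ R :=
  fun d => ∑ k ∈ Finset.range ((d.sum fun _ n => n) + 1),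
    PowerSeries.coeff k f * MvPowerSeries.coeff d (u ^ k)

namespace FlowAux

variable {R : Type*} [CommRing R]

lemma coeff_derivativeFun' (f : PowerSeries R) (n : ℕ) :
    PowerSeries.coeff n (derivativeFun f) = PowerSeries.coeff (n + 1) f * (n + 1) := by
  exact PowerSeries.coeff_derivative f n

/-- The monomial exponent `(a, b)` as a `Fin 2 →₀ ℕ`. -/
noncomputable def Dm (a b : ℕ) : Fin 2 →₀ ℕ := Finsupp.single 0 a + Finsupp.single 1 b

@[simp] lemma Dm_apply0 (a b : ℕ) : Dm a b 0 = a := by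
  simp [Dm, Finsupp.single_apply]

@[simp] lemma Dm_apply1 (a b : ℕ) : Dm a b 1 = b := by
  simp [Dm, Finsupp.single_apply]

lemma Dm_eq (d : Fin 2 →₀ ℕ) : Dm (d 0) (d 1) = d := by
  ext i
  fin_cases i <;> simp

lemma Dm_add (a b c e : ℕ) : Dm a b + Dm c e = Dm (a + c) (b + e) := by
  ext i; fin_cases i <;> simp

lemma Dm_inj {a b c e : ℕ} (h : Dm a b = Dm c e) : a = c ∧ b = e := by
  constructor
  · rw [← Dm_apply0 a b, h, Dm_apply0]
  · rw [← Dm_apply1 a b, h, Dm_apply1]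

lemma single0_eq_Dm (k : ℕ) : Finsupp.single (0 : Fin 2) k = Dm k 0 := by
  simp [Dm]

lemma single1_eq_Dm (k : ℕ) : Finsupp.single (1 : Fin 2) k = Dm 0 k := by
  simp [Dm]

lemma Dm_eq_zero_iff {a b : ℕ} : Dm a b = 0 ↔ a = 0 ∧ b = 0 := by
  constructor
  · intro h
    constructor
    · rw [← Dm_apply0 a b, h]; simp
    · rw [← Dm_apply1 a b, h]; simp
  · rintro ⟨rfl, rfl⟩; simp [Dm]

lemma Dm_sum (a b : ℕ) : ((Dm a b).sum fun _ n => n) = a + b := by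
  rw [Finsupp.sum_fintype _ _ (fun _ => rfl)]
  simp [Fin.sum_univ_two]

lemma ext2 {u v : MvPowerSeries (Fin 2) R}
    (h : ∀ a b, MvPowerSeries.coeff (Dm a b) u = MvPowerSeries.coeff (Dm a b) v) :
    u = v :=
  MvPowerSeries.ext fun d => by rw [← Dm_eq d]; exact h _ _

lemma sum_antidiagonal_Dm {M : Type*} [AddCommMonoid M] (a b : ℕ)
    (t : (Fin 2 →₀ ℕ) × (Fin 2 →₀ ℕ) → M) :
    ∑ x ∈ Finset.HasAntidiagonal.antidiagonal (Dm a b), t x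
      = ∑ i ∈ Finset.HasAntidiagonal.antidiagonal a, ∑ j ∈ Finset.HasAntidiagonal.antidiagonal b,
          t (Dm i.1 j.1, Dm i.2 j.2) := by
  rw [← Finset.sum_product']
  refine Finset.sum_nbij' (i := fun x => ((x.1 0, x.2 0), (x.1 1, x.2 1)))
    (j := fun p => (Dm p.1.1 p.2.1, Dm p.1.2 p.2.2)) ?_ ?_ ?_ ?_ ?_
  · intro x hx
    rw [Finset.HasAntidiagonal.mem_antidiagonal] at hx
    simp only [Finset.mem_product, Finset.HasAntidiagonal.mem_antidiagonal]
    constructor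
    · have := congrArg (fun d => d 0) hx; simpa using this
    · have := congrArg (fun d => d 1) hx; simpa using this
  · intro p hp
    simp only [Finset.mem_product, Finset.HasAntidiagonal.mem_antidiagonal] at hp
    rw [Finset.HasAntidiagonal.mem_antidiagonal, Dm_add, hp.1, hp.2]
  · intro x hx
    simp [Dm_eq]
  · intro p hp
    simp
  · intro x hx
    simp [Dm_eq]


section Derivs

variable {R : Type*} [CommRing R]

lemma coeff_pderiv2_1 (u : MvPowerSeries (Fin 2) R) (a b : ℕ) :
    MvPowerSeries.coeff (Dm a b) (pderiv2 1 u)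
      = ((b + 1 : ℕ) : R) * MvPowerSeries.coeff (Dm a (b + 1)) u := by
  rw [MvPowerSeries.coeff_apply, pderiv2, single1_eq_Dm, Dm_add]
  simp

lemma coeff_pderiv2_0 (u : MvPowerSeries (Fin 2) R) (a b : ℕ) :
    MvPowerSeries.coeff (Dm a b) (pderiv2 0 u)
      = ((a + 1 : ℕ) : R) * MvPowerSeries.coeff (Dm (a + 1) b) u := by
  rw [MvPowerSeries.coeff_apply, pderiv2, single0_eq_Dm, Dm_add]
  simp

/-- The one-variable Leibniz identity on antidiagonal sums. -/
lemma key_sum (U V : ℕ → R) (b : ℕ) :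
    ((b + 1 : ℕ) : R) * ∑ j ∈ Finset.HasAntidiagonal.antidiagonal (b + 1), U j.1 * V j.2
      = (∑ j ∈ Finset.HasAntidiagonal.antidiagonal b, U j.1 * (((j.2 + 1 : ℕ) : R) * V (j.2 + 1)))
        + ∑ j ∈ Finset.HasAntidiagonal.antidiagonal b, (((j.1 + 1 : ℕ) : R) * U (j.1 + 1)) * V j.2 := by
  have h := congrArg (PowerSeries.coeff b)
    (PowerSeries.derivativeFun_mul (PowerSeries.mk U) (PowerSeries.mk V))
  simp only [coeff_derivativeFun', map_add, smul_eq_mul, PowerSeries.coeff_mul,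
    PowerSeries.coeff_mk] at h
  rw [show (∑ j ∈ Finset.HasAntidiagonal.antidiagonal b, (((j.1 + 1 : ℕ) : R) * U (j.1 + 1)) * V j.2)
      = ∑ j ∈ Finset.HasAntidiagonal.antidiagonal b, (((j.2 + 1 : ℕ) : R) * U (j.2 + 1)) * V j.1 from
    (Finset.Nat.sum_antidiagonal_swap (n := b)
      (f := fun p => (((p.1 + 1 : ℕ) : R) * U (p.1 + 1)) * V p.2)).symm]
  push_cast
  calc ((b : R) + 1) * ∑ j ∈ Finset.HasAntidiagonal.antidiagonal (b + 1), U j.1 * V j.2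
      = (∑ j ∈ Finset.HasAntidiagonal.antidiagonal (b + 1), U j.1 * V j.2) * ((b : R) + 1) := by ring
    _ = _ := by
        rw [h]
        congr 1
        · exact Finset.sum_congr rfl fun j _ => by ring
        · exact Finset.sum_congr rfl fun j _ => by ring

lemma pderiv2_mul (i : Fin 2) (u v : MvPowerSeries (Fin 2) R) :
    pderiv2 i (u * v) = u * pderiv2 i v + pderiv2 i u * v := by
  apply ext2
  intro a b
  rw [map_add]
  have hi : i = 0 ∨ i = 1 := by fin_cases i <;> simp
  rcases hi with rfl | rfl
  · -- i = 0
    rw [coeff_pderiv2_0, MvPowerSeries.coeff_mul, MvPowerSeries.coeff_mul,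
      MvPowerSeries.coeff_mul, sum_antidiagonal_Dm, sum_antidiagonal_Dm, sum_antidiagonal_Dm]
    simp only [coeff_pderiv2_0]
    rw [Finset.sum_comm (s := Finset.HasAntidiagonal.antidiagonal (a + 1)),
      Finset.sum_comm (s := Finset.HasAntidiagonal.antidiagonal a), Finset.sum_comm (s := Finset.HasAntidiagonal.antidiagonal a),
      Finset.mul_sum, ← Finset.sum_add_distrib]
    refine Finset.sum_congr rfl fun j _ => ?_
    exact key_sum (fun n => MvPowerSeries.coeff (Dm n j.1) u)
      (fun n => MvPowerSeries.coeff (Dm n j.2) v) a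
  · -- i = 1
    rw [coeff_pderiv2_1, MvPowerSeries.coeff_mul, MvPowerSeries.coeff_mul,
      MvPowerSeries.coeff_mul, sum_antidiagonal_Dm, sum_antidiagonal_Dm, sum_antidiagonal_Dm]
    simp only [coeff_pderiv2_1]
    rw [Finset.mul_sum, ← Finset.sum_add_distrib]
    refine Finset.sum_congr rfl fun i _ => ?_
    exact key_sum (fun n => MvPowerSeries.coeff (Dm i.1 n) u)
      (fun n => MvPowerSeries.coeff (Dm i.2 n) v) b

end Derivs


section Flow

variable {R : Type*} [CommRing R] [Algebra ℚ R]

/-- `1/n!` as an element of `R`. -/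
noncomputable def cR (R : Type*) [CommRing R] [Algebra ℚ R] (n : ℕ) : R :=
  algebraMap ℚ R (1 / n.factorial)

@[simp] lemma cR_zero : cR R 0 = 1 := by simp [cR]

@[simp] lemma cR_one : cR R 1 = 1 := by simp [cR]

lemma cfac (n : ℕ) : ((n + 1 : ℕ) : R) * cR R (n + 1) = cR R n := by
  have : ((n + 1 : ℕ) : R) = algebraMap ℚ R ((n + 1 : ℕ) : ℚ) := by
    simp
  rw [this, cR, cR, ← map_mul]
  congr 1
  rw [Nat.factorial_succ]
  have h0 : ((n.factorial : ℚ)) ≠ 0 := Nat.cast_ne_zero.mpr n.factorial_ne_zero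
  have h1 : (((n + 1 : ℕ) : ℚ)) ≠ 0 := Nat.cast_ne_zero.mpr (Nat.succ_ne_zero n)
  push_cast
  field_simp

lemma coeff_flow_zero (f : PowerSeries R) (a : ℕ) :
    MvPowerSeries.coeff (Dm a 0) (flowMv f) = if a = 1 then 1 else 0 := by
  rw [MvPowerSeries.coeff_apply, flowMv]
  simp

lemma coeff_flow_succ (f : PowerSeries R) (a b : ℕ) :
    MvPowerSeries.coeff (Dm a (b + 1)) (flowMv f)
      = cR R (b + 1) * PowerSeries.coeff a (autPolyPS f b) := by
  rw [MvPowerSeries.coeff_apply, flowMv]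
  simp [cR]

/-- `f(X)` viewed as a two-variable series in the variable `X` only. -/
noncomputable def Fser (f : PowerSeries R) : MvPowerSeries (Fin 2) R :=
  fun d => if d 1 = 0 then PowerSeries.coeff (d 0) f else 0

lemma coeff_Fser (f : PowerSeries R) (a b : ℕ) :
    MvPowerSeries.coeff (Dm a b) (Fser f)
      = if b = 0 then PowerSeries.coeff a f else 0 := by
  rw [MvPowerSeries.coeff_apply, Fser]
  simp

lemma coeff_Fser_mul (f : PowerSeries R) (v : MvPowerSeries (Fin 2) R) (a b : ℕ) :
    MvPowerSeries.coeff (Dm a b) (Fser f * v)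
      = ∑ i ∈ Finset.HasAntidiagonal.antidiagonal a,
          PowerSeries.coeff i.1 f * MvPowerSeries.coeff (Dm i.2 b) v := by
  rw [MvPowerSeries.coeff_mul, sum_antidiagonal_Dm]
  refine Finset.sum_congr rfl fun i _ => ?_
  rw [Finset.sum_eq_single (0, b)]
  · simp [coeff_Fser]
  · intro j hj hne
    rw [Finset.HasAntidiagonal.mem_antidiagonal] at hj
    have hj1 : j.1 ≠ 0 := by
      intro h
      exact hne (Prod.ext h (by omega))
    rw [coeff_Fser, if_neg hj1, zero_mul]
  · intro h
    exact absurd (Finset.HasAntidiagonal.mem_antidiagonal.mpr (zero_add b)) h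

lemma pderiv2_one (i : Fin 2) : pderiv2 i (1 : MvPowerSeries (Fin 2) R) = 0 := by
  apply MvPowerSeries.ext
  intro d
  rw [MvPowerSeries.coeff_apply, pderiv2]
  rw [MvPowerSeries.coeff_one, if_neg, mul_zero, map_zero]
  intro h
  have := congrArg (fun e => e i) h
  simp at this

/-- Part 2 of the theorem, with `Fser`. -/
lemma Fser_mul_pderiv (f : PowerSeries R) :
    Fser f * pderiv2 0 (flowMv f) = pderiv2 1 (flowMv f) := by
  apply ext2
  intro a b
  rw [coeff_Fser_mul, coeff_pderiv2_1]
  simp only [coeff_pderiv2_0]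
  cases b with
  | zero =>
    rw [coeff_flow_succ, autPolyPS]
    rw [Finset.sum_eq_single (a, 0)]
    · simp [coeff_flow_zero]
    · intro j hj hne
      rw [Finset.HasAntidiagonal.mem_antidiagonal] at hj
      have hj2 : j.2 ≠ 0 := by
        intro h
        exact hne (Prod.ext (by omega) h)
      rw [coeff_flow_zero, if_neg (by omega), mul_zero, mul_zero]
    · intro h
      exact absurd (Finset.HasAntidiagonal.mem_antidiagonal.mpr (add_zero a)) h
  | succ b =>
    simp only [coeff_flow_succ]
    rw [show autPolyPS f (b + 1) = f * derivativeFun (autPolyPS f b) from rfl,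
      PowerSeries.coeff_mul]
    rw [← mul_assoc, cfac, Finset.mul_sum (Finset.HasAntidiagonal.antidiagonal a) _ (cR R (b + 1))]
    refine Finset.sum_congr rfl fun i _ => ?_
    rw [coeff_derivativeFun']
    push_cast
    ring

end Flow


section Main

variable {R : Type*} [CommRing R] [Algebra ℚ R]

lemma coeff_substPS (u : MvPowerSeries (Fin 2) R) (f : PowerSeries R) (d : Fin 2 →₀ ℕ) :
    MvPowerSeries.coeff d (substPS u f)
      = ∑ k ∈ Finset.range ((d.sum fun _ n => n) + 1),
          PowerSeries.coeff k f * MvPowerSeries.coeff d (u ^ k) := rfl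

lemma Dm_inj_iff {a b c e : ℕ} : Dm a b = Dm c e ↔ a = c ∧ b = e :=
  ⟨Dm_inj, by rintro ⟨rfl, rfl⟩; rfl⟩

lemma coeff_pow_eq_zero {u : MvPowerSeries (Fin 2) R}
    (hu : MvPowerSeries.coeff 0 u = 0) :
    ∀ (k : ℕ) (d : Fin 2 →₀ ℕ), d 0 + d 1 < k → MvPowerSeries.coeff d (u ^ k) = 0 := by
  intro k
  induction k with
  | zero => intro d hd; omega
  | succ k IH =>
    intro d hd
    rw [pow_succ, MvPowerSeries.coeff_mul]
    apply Finset.sum_eq_zero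
    intro x hx
    rw [Finset.HasAntidiagonal.mem_antidiagonal] at hx
    by_cases hx2 : x.2 = 0
    · rw [hx2, hu, mul_zero]
    · have h2 : x.2 0 ≠ 0 ∨ x.2 1 ≠ 0 := by
        by_contra h
        push_neg at h
        exact hx2 (by ext i; fin_cases i <;> simp [h.1, h.2])
      have e0 : d 0 = x.1 0 + x.2 0 := by rw [← hx]; simp
      have e1 : d 1 = x.1 1 + x.2 1 := by rw [← hx]; simp
      rw [IH x.1 (by omega), zero_mul]

lemma coeff_zero_flow (f : PowerSeries R) :
    MvPowerSeries.coeff 0 (flowMv f) = 0 := by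
  rw [MvPowerSeries.coeff_apply, flowMv]
  simp

lemma sum_trim {u : MvPowerSeries (Fin 2) R}
    (hu : MvPowerSeries.coeff 0 u = 0) (g : PowerSeries R) (a b : ℕ) {N : ℕ}
    (hN : a + b + 1 ≤ N) :
    ∑ k ∈ Finset.range N,
        PowerSeries.coeff k g * MvPowerSeries.coeff (Dm a b) (u ^ k)
      = ∑ k ∈ Finset.range (a + b + 1),
          PowerSeries.coeff k g * MvPowerSeries.coeff (Dm a b) (u ^ k) := by
  refine (Finset.sum_subset (Finset.range_subset_range.mpr hN) fun k hk hk' => ?_).symm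
  rw [Finset.mem_range] at hk'
  rw [coeff_pow_eq_zero hu k _ (by simp; omega), mul_zero]

lemma coeff_pow_flow_T0 (f : PowerSeries R) :
    ∀ (k a : ℕ), MvPowerSeries.coeff (Dm a 0) ((flowMv f) ^ k)
      = if a = k then 1 else 0 := by
  intro k
  induction k with
  | zero =>
    intro a
    rw [pow_zero, MvPowerSeries.coeff_one]
    simp [Dm_eq_zero_iff]
  | succ k IH =>
    intro a
    rw [pow_succ, MvPowerSeries.coeff_mul, sum_antidiagonal_Dm]
    simp only [Finset.Nat.antidiagonal_zero, Finset.sum_singleton, IH, coeff_flow_zero]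
    have h1 : ∀ i : ℕ × ℕ, ((if i.1 = k then (1 : R) else 0) * (if i.2 = 1 then 1 else 0))
        = if i = (k, 1) then 1 else 0 := by
      intro i
      by_cases ha : i.1 = k <;> by_cases hb : i.2 = 1 <;> simp [Prod.ext_iff, ha, hb]
    simp only [h1]
    rw [Finset.sum_ite_eq' (Finset.HasAntidiagonal.antidiagonal a) ((k, 1) : ℕ × ℕ) (fun _ => (1 : R))]
    simp only [Finset.HasAntidiagonal.mem_antidiagonal]
    by_cases h : a = k + 1
    · simp [h]
    · rw [if_neg (by omega), if_neg h]

/-- `pderiv2 1 (Φ^k) = F·pderiv2 0 (Φ^k)`. -/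
lemma pd1_pow (f : PowerSeries R) :
    ∀ k : ℕ, pderiv2 1 ((flowMv f) ^ k) = Fser f * pderiv2 0 ((flowMv f) ^ k) := by
  intro k
  induction k with
  | zero => rw [pow_zero, pderiv2_one, pderiv2_one, mul_zero]
  | succ k IH =>
    rw [pow_succ, pderiv2_mul, pderiv2_mul, IH, ← Fser_mul_pderiv f]
    ring

/-- Generalized autonomous polynomials. -/
noncomputable def aut2 (f g : PowerSeries R) : ℕ → PowerSeries R
  | 0 => g
  | b + 1 => f * derivativeFun (aut2 f g b)

lemma aut2_self (f : PowerSeries R) : ∀ b, aut2 f f b = autPolyPS f b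
  | 0 => rfl
  | b + 1 => by
      rw [show aut2 f f (b + 1) = f * derivativeFun (aut2 f f b) from rfl,
        show autPolyPS f (b + 1) = f * derivativeFun (autPolyPS f b) from rfl,
        aut2_self f b]

lemma main_ind [IsDomain R] (f g : PowerSeries R) (b : ℕ) : ∀ a : ℕ,
    ∑ k ∈ Finset.range (a + b + 1), PowerSeries.coeff k g *
        MvPowerSeries.coeff (Dm a b) ((flowMv f) ^ k)
      = cR R b * PowerSeries.coeff a (aut2 f g b) := by
  induction b with
  | zero =>
    intro a
    simp only [coeff_pow_flow_T0]
    have h1 : ∀ k, PowerSeries.coeff k g * (if a = k then (1 : R) else 0)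
        = if k = a then PowerSeries.coeff k g else 0 := by
      intro k
      by_cases h : a = k <;> simp [h, eq_comm]
    simp only [h1]
    rw [Finset.sum_ite_eq' (Finset.range (a + 0 + 1)) a
      (fun k => PowerSeries.coeff k g)]
    simp [aut2]
  | succ b IH =>
    intro a
    have hchar : CharZero R := charZero_of_injective_algebraMap (algebraMap ℚ R).injective
    apply mul_left_cancel₀
      (show ((b + 1 : ℕ) : R) ≠ 0 from Nat.cast_ne_zero.mpr (Nat.succ_ne_zero b))
    calc ((b + 1 : ℕ) : R) * ∑ k ∈ Finset.range (a + (b + 1) + 1),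
          PowerSeries.coeff k g * MvPowerSeries.coeff (Dm a (b + 1)) ((flowMv f) ^ k)
        = ∑ k ∈ Finset.range (a + (b + 1) + 1), ∑ i ∈ Finset.HasAntidiagonal.antidiagonal a,
            PowerSeries.coeff k g * (PowerSeries.coeff i.1 f * (((i.2 + 1 : ℕ) : R) *
              MvPowerSeries.coeff (Dm (i.2 + 1) b) ((flowMv f) ^ k))) := by
          rw [Finset.mul_sum]
          refine Finset.sum_congr rfl fun k _ => ?_
          have h1 := coeff_pderiv2_1 ((flowMv f) ^ k) a b
          have h3 : MvPowerSeries.coeff (Dm a b) (pderiv2 1 ((flowMv f) ^ k))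
              = ∑ i ∈ Finset.HasAntidiagonal.antidiagonal a, PowerSeries.coeff i.1 f *
                  (((i.2 + 1 : ℕ) : R) *
                    MvPowerSeries.coeff (Dm (i.2 + 1) b) ((flowMv f) ^ k)) := by
            rw [pd1_pow f k, coeff_Fser_mul]
            simp only [coeff_pderiv2_0]
          calc ((b + 1 : ℕ) : R) * (PowerSeries.coeff k g *
                MvPowerSeries.coeff (Dm a (b + 1)) ((flowMv f) ^ k))
              = PowerSeries.coeff k g * (((b + 1 : ℕ) : R) *
                  MvPowerSeries.coeff (Dm a (b + 1)) ((flowMv f) ^ k)) := by ring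
            _ = PowerSeries.coeff k g *
                  MvPowerSeries.coeff (Dm a b) (pderiv2 1 ((flowMv f) ^ k)) := by rw [← h1]
            _ = _ := by rw [h3, Finset.mul_sum]
      _ = ∑ i ∈ Finset.HasAntidiagonal.antidiagonal a, PowerSeries.coeff i.1 f * (((i.2 + 1 : ℕ) : R) *
            ∑ k ∈ Finset.range (a + (b + 1) + 1), PowerSeries.coeff k g *
              MvPowerSeries.coeff (Dm (i.2 + 1) b) ((flowMv f) ^ k)) := by
          rw [Finset.sum_comm]
          refine Finset.sum_congr rfl fun i _ => ?_
          rw [Finset.mul_sum, Finset.mul_sum]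
          exact Finset.sum_congr rfl fun k _ => by ring
      _ = ∑ i ∈ Finset.HasAntidiagonal.antidiagonal a, PowerSeries.coeff i.1 f * (((i.2 + 1 : ℕ) : R) *
            (cR R b * PowerSeries.coeff (i.2 + 1) (aut2 f g b))) := by
          refine Finset.sum_congr rfl fun i hi => ?_
          rw [Finset.HasAntidiagonal.mem_antidiagonal] at hi
          rw [sum_trim (coeff_zero_flow f) g (i.2 + 1) b (by omega), IH (i.2 + 1)]
      _ = ((b + 1 : ℕ) : R) * (cR R (b + 1) * PowerSeries.coeff a (aut2 f g (b + 1))) := by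
          rw [← mul_assoc, cfac,
            show aut2 f g (b + 1) = f * derivativeFun (aut2 f g b) from rfl,
            PowerSeries.coeff_mul, Finset.mul_sum (Finset.HasAntidiagonal.antidiagonal a) _ (cR R b)]
          refine Finset.sum_congr rfl fun i _ => ?_
          rw [coeff_derivativeFun']
          push_cast
          ring

lemma substPS_X (f : PowerSeries R) :
    substPS (MvPowerSeries.X 0 : MvPowerSeries (Fin 2) R) f = Fser f := by
  apply ext2
  intro a b
  rw [coeff_substPS, Dm_sum, coeff_Fser]
  simp only [MvPowerSeries.coeff_X_pow, single0_eq_Dm, Dm_inj_iff]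
  cases b with
  | zero =>
    rw [if_pos rfl]
    have h1 : ∀ k, PowerSeries.coeff k f * (if a = k ∧ True then (1 : R) else 0)
        = if k = a then PowerSeries.coeff k f else 0 := by
      intro k
      by_cases h : a = k <;> simp [h, eq_comm]
    simp only [h1]
    rw [Finset.sum_ite_eq' (Finset.range (a + 0 + 1)) a (fun k => PowerSeries.coeff k f)]
    simp
  | succ b =>
    rw [if_neg (Nat.succ_ne_zero b)]
    apply Finset.sum_eq_zero
    intro k _
    rw [if_neg (by simp), mul_zero]

theorem flowMv_solves' [IsDomain R] (f : PowerSeries R) :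
    pderiv2 1 (flowMv f) = substPS (flowMv f) f ∧
    substPS (MvPowerSeries.X 0) f * pderiv2 0 (flowMv f) = pderiv2 1 (flowMv f) := by
  constructor
  · apply ext2
    intro a b
    rw [coeff_pderiv2_1, coeff_flow_succ, coeff_substPS, Dm_sum, main_ind f f b a,
      aut2_self, ← mul_assoc, cfac]
  · rw [substPS_X, Fser_mul_pderiv]

end Main

end FlowAux

/-- The flow `Φ(X,T)` of `f` formally solves the autonomous differential equation
`δ_t Φ = f(Φ)`: one has `∂Φ/∂T = f(Φ(X,T))` and moreover `f·∂Φ/∂X = ∂Φ/∂T` in `R⟦X,T⟧`. -/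
theorem flowMv_solves {R : Type*} [CommRing R] [IsDomain R] [Algebra ℚ R]
    (f : PowerSeries R) :
    pderiv2 1 (flowMv f) = substPS (flowMv f) f ∧
    substPS (MvPowerSeries.X 0) f * pderiv2 0 (flowMv f) = pderiv2 1 (flowMv f) := by
  exact FlowAux.flowMv_solves' f
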